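/- As formal power series in q, (q^2;q^2)_∞ / (q;q^2)_∞ = ∑_{n≥0} q^{n(n+1)/2}. -/

import Mathlib

/-- The infinite q-Pochhammer symbol `(a; q)_∞ = ∏_{j ≥ 0} (1 - a q^j)`. -/
noncomputable def qPochInf (a q : ℂ) : ℂ := ∏' j : ℕ, (1 - a * q ^ j)

/-- The finite q-Pochhammer symbol `(a; q)_n = ∏_{j = 0}^{n-1} (1 - a q^j)`. -/
noncomputable def qPoch (a q : ℂ) (n : ℕ) : ℂ := ∏ j ∈ Finset.range n, (1 - a * q ^ j)

open Filter Finset Complex Topology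


lemma aux_norm_lt (a q : ℂ) (ha : ‖a‖ < 1) (hq : ‖q‖ < 1) (j : ℕ) : ‖a * q ^ j‖ < 1 := by
  rw [norm_mul, norm_pow]
  calc ‖a‖ * ‖q‖ ^ j ≤ ‖a‖ * 1 := by
        refine mul_le_mul_of_nonneg_left ?_ (norm_nonneg a)
        exact pow_le_one₀ (norm_nonneg q) hq.le
    _ < 1 := by simpa using ha

lemma aux_ne (a q : ℂ) (ha : ‖a‖ < 1) (hq : ‖q‖ < 1) (j : ℕ) : 1 - a * q ^ j ≠ 0 := by
  intro h
  have h2 : a * q ^ j = 1 := by linear_combination -h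
  have := aux_norm_lt a q ha hq j
  rw [h2] at this; simp at this

lemma aux_log_summable (a q : ℂ) (ha : ‖a‖ < 1) (hq : ‖q‖ < 1) :
    Summable fun j : ℕ => Complex.log (1 - a * q ^ j) := by
  have C : ℝ := 0
  refine Summable.of_norm_bounded
      (g := fun j => (‖a‖ ^ 2 * (1 - ‖a‖)⁻¹ / 2 + ‖a‖) * ‖q‖ ^ j) ?_ ?_
  · exact (summable_geometric_of_lt_one (norm_nonneg q) hq).mul_left _
  · intro j
    have hn := aux_norm_lt a q ha hq j
    have h1 : ‖Complex.log (1 - a * q ^ j)‖ ≤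
        ‖a * q ^ j‖ ^ 2 * (1 - ‖a * q ^ j‖)⁻¹ / 2 + ‖a * q ^ j‖ := by
      have := Complex.norm_log_one_add_le (z := -(a * q ^ j)) (by simpa using hn)
      simpa [sub_eq_add_neg] using this
    refine h1.trans ?_
    have hqj : ‖q‖ ^ j ≤ 1 := pow_le_one₀ (norm_nonneg q) hq.le
    have hnorm : ‖a * q ^ j‖ ≤ ‖a‖ := by
      rw [norm_mul, norm_pow]
      calc ‖a‖ * ‖q‖ ^ j ≤ ‖a‖ * 1 := mul_le_mul_of_nonneg_left hqj (norm_nonneg a)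
        _ = ‖a‖ := mul_one _
    have h0 : (0:ℝ) ≤ ‖a * q ^ j‖ := norm_nonneg _
    have hinv : (1 - ‖a * q ^ j‖)⁻¹ ≤ (1 - ‖a‖)⁻¹ := by
      apply inv_anti₀ (by linarith) (by linarith)
    have hsq : ‖a * q ^ j‖ ^ 2 ≤ ‖a‖ * (‖a‖ * ‖q‖ ^ j) := by
      rw [norm_mul, norm_pow, sq]
      have hb : ‖a‖ * ‖q‖ ^ j ≤ ‖a‖ := by
        calc ‖a‖ * ‖q‖ ^ j ≤ ‖a‖ * 1 := mul_le_mul_of_nonneg_left hqj (norm_nonneg a)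
          _ = ‖a‖ := mul_one _
      exact mul_le_mul_of_nonneg_right hb (by positivity)
    have h2 : ‖a * q ^ j‖ ^ 2 * (1 - ‖a * q ^ j‖)⁻¹
            ≤ (‖a‖ ^ 2 * (1 - ‖a‖)⁻¹) * ‖q‖ ^ j := by
      calc ‖a * q ^ j‖ ^ 2 * (1 - ‖a * q ^ j‖)⁻¹
            ≤ (‖a‖ * (‖a‖ * ‖q‖ ^ j)) * (1 - ‖a‖)⁻¹ := by
              apply mul_le_mul hsq hinv (inv_nonneg.mpr (by linarith)) (by positivity)
          _ = (‖a‖ ^ 2 * (1 - ‖a‖)⁻¹) * ‖q‖ ^ j := by ring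
    have h3 : ‖a * q ^ j‖ ≤ ‖a‖ * ‖q‖ ^ j := by rw [norm_mul, norm_pow]
    have key : ‖a * q ^ j‖ ^ 2 * (1 - ‖a * q ^ j‖)⁻¹ / 2 + ‖a * q ^ j‖ ≤
        (‖a‖ ^ 2 * (1 - ‖a‖)⁻¹ / 2) * ‖q‖ ^ j + ‖a‖ * ‖q‖ ^ j := by
      
      linarith
    calc _ ≤ (‖a‖ ^ 2 * (1 - ‖a‖)⁻¹ / 2) * ‖q‖ ^ j + ‖a‖ * ‖q‖ ^ j := key
      _ = (‖a‖ ^ 2 * (1 - ‖a‖)⁻¹ / 2 + ‖a‖) * ‖q‖ ^ j := by ring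

lemma aux_mult (a q : ℂ) (ha : ‖a‖ < 1) (hq : ‖q‖ < 1) :
    Multipliable (fun j : ℕ => 1 - a * q ^ j) :=
  Complex.multipliable_of_summable_log (aux_log_summable a q ha hq)

lemma qPochInf_ne (a q : ℂ) (ha : ‖a‖ < 1) (hq : ‖q‖ < 1) : qPochInf a q ≠ 0 := by
  have := Complex.cexp_tsum_eq_tprod (f := fun j => 1 - a * q ^ j)
    (fun j => aux_ne a q ha hq j) (aux_log_summable a q ha hq)
  rw [qPochInf, ← this]
  exact Complex.exp_ne_zero _

lemma tendsto_qPoch (a q : ℂ) (ha : ‖a‖ < 1) (hq : ‖q‖ < 1) :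
    Tendsto (fun n => qPoch a q n) atTop (𝓝 (qPochInf a q)) :=
  (aux_mult a q ha hq).hasProd.tendsto_prod_nat


noncomputable def pp (q : ℂ) (n : ℕ) : ℂ := ∏ j ∈ Finset.range n, (1 - q ^ (j+1))

lemma pp_zero (q : ℂ) : pp q 0 = 1 := by simp [pp]

lemma pp_succ (q : ℂ) (n : ℕ) : pp q (n+1) = pp q n * (1 - q ^ (n+1)) := by
  rw [pp, pp, Finset.prod_range_succ]

lemma pp_ne (q : ℂ) (hq : ‖q‖ < 1) (n : ℕ) : pp q n ≠ 0 := by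
  rw [pp, Finset.prod_ne_zero_iff]
  intro j _ h
  have h2 : q ^ (j+1) = 1 := by linear_combination -h
  have : ‖q ^ (j+1)‖ < 1 := by
    rw [norm_pow]; exact pow_lt_one₀ (norm_nonneg q) hq (Nat.succ_ne_zero j)
  rw [h2] at this; simp at this

noncomputable def gz (q : ℂ) (N : ℕ) (m : ℤ) : ℂ :=
  if 0 ≤ m ∧ m ≤ N then pp q N / (pp q m.toNat * pp q (N - m.toNat)) else 0

lemma gz_of_neg (q : ℂ) (N : ℕ) (m : ℤ) (h : m < 0) : gz q N m = 0 := by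
  rw [gz, if_neg]; omega

lemma gz_of_gt (q : ℂ) (N : ℕ) (m : ℤ) (h : (N:ℤ) < m) : gz q N m = 0 := by
  rw [gz, if_neg]; omega

lemma gz_zero (q : ℂ) (hq : ‖q‖ < 1) (N : ℕ) : gz q N 0 = 1 := by
  rw [gz, if_pos (by omega)]
  simp [pp_zero, div_self (pp_ne q hq N)]

lemma gz_top (q : ℂ) (hq : ‖q‖ < 1) (N : ℕ) : gz q N N = 1 := by
  rw [gz, if_pos (by omega)]
  simp [pp_zero, div_self (pp_ne q hq N)]

lemma gz_symm (q : ℂ) (N : ℕ) (m : ℤ) : gz q N m = gz q N (N - m) := by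
  by_cases h : 0 ≤ m ∧ m ≤ N
  · obtain ⟨h1, h2⟩ := h
    have e1 : ((N:ℤ) - m).toNat = N - m.toNat := by omega
    rw [gz, gz, if_pos (by omega), if_pos (by omega), e1,
      show N - (N - m.toNat) = m.toNat by omega, mul_comm]
  · rw [gz, gz, if_neg h, if_neg (by omega)]

lemma gz_nat (q : ℂ) (N k : ℕ) (h : k ≤ N) :
    gz q N k = pp q N / (pp q k * pp q (N - k)) := by
  rw [gz, if_pos ⟨by omega, by exact_mod_cast h⟩, Int.toNat_natCast]

lemma ruleA (q : ℂ) (hq : ‖q‖ < 1) (N : ℕ) (m : ℤ) :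
    gz q (N+1) m = gz q N (m-1) + q ^ m * gz q N m := by
  by_cases hm0 : m < 0
  · rw [gz_of_neg q _ m hm0, gz_of_neg q _ m hm0, gz_of_neg q N _ (by omega)]; ring
  by_cases hmN : (N:ℤ) + 1 < m
  · rw [gz_of_gt q _ m (by push_cast; omega), gz_of_gt q N m (by omega),
      gz_of_gt q N _ (by omega)]; ring
  by_cases hm00 : m = 0
  · subst hm00
    rw [gz_zero q hq, gz_of_neg q N _ (by omega), gz_zero q hq]; simp
  by_cases hmtop : m = (N:ℤ) + 1
  · subst hmtop
    rw [show ((N:ℤ) + 1) - 1 = (N:ℤ) by ring, gz_top q hq,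
      show ((N:ℤ) + 1) = ((N+1:ℕ):ℤ) by push_cast; ring, gz_top q hq,
      gz_of_gt q N _ (by push_cast; omega)]
    ring
  · -- main case : 1 ≤ m ≤ N
    lift m to ℕ using (by omega)
    have hk1 : 1 ≤ m := by omega
    have hkN : m ≤ N := by omega
    obtain ⟨j, rfl⟩ : ∃ j, m = j + 1 := ⟨m - 1, by omega⟩
    obtain ⟨i, rfl⟩ : ∃ i, N = j + 1 + i := ⟨N - (j+1), by omega⟩
    rw [show ((j+1:ℕ):ℤ) - 1 = ((j:ℕ):ℤ) by push_cast; ring, zpow_natCast,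
      gz_nat q _ _ (by omega), gz_nat q _ _ (by omega), gz_nat q _ _ (by omega)]
    rw [show j + 1 + i + 1 - (j + 1) = i + 1 by omega,
      show j + 1 + i - j = i + 1 by omega,
      show j + 1 + i - (j + 1) = i by omega,
      pp_succ q (j+1+i), pp_succ q j, pp_succ q i]
    have h1 := pp_ne q hq (j+1+i)
    have h2 := pp_ne q hq j
    have h3 := pp_ne q hq i
    have h4 := pp_ne q hq (j+1)
    have h5 := pp_ne q hq (i+1)
    rw [pp_succ] at h4 h5
    have h6 : 1 - q ^ (j+1) ≠ 0 := right_ne_zero_of_mul h4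
    have h7 : 1 - q ^ (i+1) ≠ 0 := right_ne_zero_of_mul h5
    have h8 : 1 - q ^ (j+1+i+1) ≠ 0 := right_ne_zero_of_mul (pp_succ q (j+1+i) ▸ pp_ne q hq (j+1+i+1))
    field_simp
    ring

lemma ruleB (q : ℂ) (hq : ‖q‖ < 1) (N : ℕ) (m : ℤ) :
    gz q (N+1) m = q ^ ((N:ℤ) + 1 - m) * gz q N (m-1) + gz q N m := by
  have h := ruleA q hq N ((N:ℤ) + 1 - m)
  have e0 : gz q (N+1) m = gz q (N+1) ((N:ℤ) + 1 - m) := by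
    rw [gz_symm q (N+1) m]; norm_num
  have e1 : gz q N ((N:ℤ) + 1 - m - 1) = gz q N m := by
    rw [gz_symm q N ((N:ℤ) + 1 - m - 1)]; ring_nf
  have e2 : gz q N ((N:ℤ) + 1 - m) = gz q N (m - 1) := by
    rw [gz_symm q N ((N:ℤ) + 1 - m)]; ring_nf
  rw [e0, h, e1, e2]; ring

lemma twostep (q : ℂ) (hq : ‖q‖ < 1) (hq0 : q ≠ 0) (N : ℕ) (m : ℤ) :
    gz q (N+2) m = q ^ ((N:ℤ) + 1 + 1 - m) * gz q N (m-2)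
      + (1 + q ^ (N+1)) * gz q N (m-1) + q ^ m * gz q N m := by
  rw [show N + 2 = (N+1) + 1 from rfl, ruleB q hq (N+1) m, ruleA q hq N (m-1),
    ruleA q hq N m, show m - 1 - 1 = m - 2 by ring]
  have e : (q : ℂ) ^ (((N:ℕ):ℤ) + 1 + 1 - m) * q ^ (m - 1) = q ^ (N+1) := by
    rw [← zpow_add₀ hq0, show ((N:ℕ):ℤ) + 1 + 1 - m + (m - 1) = ((N:ℕ):ℤ) + 1 by ring]
    rw [show ((N:ℕ):ℤ) + 1 = ((N+1:ℕ):ℤ) by push_cast; ring, zpow_natCast]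
  push_cast at e ⊢
  linear_combination (gz q N (m-1)) * e

def TT (k : ℕ) : ℕ := k * (k+1) / 2

lemma TT_succ (k : ℕ) : TT (k+1) = TT k + (k+1) := by
  have h : (k+1) * (k+2) = k * (k+1) + (k+1) * 2 := by ring
  rw [TT, TT, show k + 1 + 1 = k + 2 from rfl, h, Nat.add_mul_div_right _ _ (by norm_num)]

lemma TT_ge (k : ℕ) : k ≤ TT k := by
  induction k with
  | zero => simp [TT]
  | succ n ih => rw [TT_succ]; omega

noncomputable def AA (q : ℂ) (n : ℕ) : ℂ :=
  ∑ k ∈ Finset.range (n+1), q ^ (TT k) * gz q (2*n+1) ((n:ℤ) - k)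

lemma AA_zero (q : ℂ) (hq : ‖q‖ < 1) : AA q 0 = 1 := by
  simp [AA, TT, gz_zero q hq]

lemma AA_succ (q : ℂ) (hq : ‖q‖ < 1) (hq0 : q ≠ 0) (n : ℕ) :
    AA q (n+1) = (1 + q ^ (n+1))^2 * AA q n := by
  have key : ∀ k : ℕ, gz q (2*(n+1)+1) (((n+1:ℕ):ℤ) - k)
      = q ^ ((2*n+1:ℤ) + 1 + 1 - (((n+1:ℕ):ℤ) - k)) * gz q (2*n+1) ((((n+1:ℕ):ℤ) - k) - 2)
        + (1 + q ^ (2*n+1+1)) * gz q (2*n+1) ((((n+1:ℕ):ℤ) - k) - 1)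
        + q ^ (((n+1:ℕ):ℤ) - k) * gz q (2*n+1) (((n+1:ℕ):ℤ) - k) := by
    intro k
    have := twostep q hq hq0 (2*n+1) (((n+1:ℕ):ℤ) - k)
    rw [show 2*n+1+2 = 2*(n+1)+1 by ring] at this
    rw [this]
    push_cast
    ring_nf
  rw [AA]
  rw [Finset.sum_congr rfl (fun k _ => by rw [key k])]
  have expand : ∀ k ∈ Finset.range (n+2),
      q ^ TT k * (q ^ ((2*n+1:ℤ) + 1 + 1 - (((n+1:ℕ):ℤ) - k)) * gz q (2*n+1) ((((n+1:ℕ):ℤ) - k) - 2)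
        + (1 + q ^ (2*n+1+1)) * gz q (2*n+1) ((((n+1:ℕ):ℤ) - k) - 1)
        + q ^ (((n+1:ℕ):ℤ) - k) * gz q (2*n+1) (((n+1:ℕ):ℤ) - k))
      = q ^ TT k * q ^ ((2*n+1:ℤ) + 1 + 1 - (((n+1:ℕ):ℤ) - k)) * gz q (2*n+1) ((n:ℤ) - 1 - k)
        + (1 + q ^ (2*n+2)) * (q ^ TT k * gz q (2*n+1) ((n:ℤ) - k))
        + q ^ TT k * q ^ (((n+1:ℕ):ℤ) - k) * gz q (2*n+1) ((n:ℤ) + 1 - k) := by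
    intro k _
    rw [show (((n+1:ℕ):ℤ) - k) - 2 = (n:ℤ) - 1 - k by push_cast; ring,
      show (((n+1:ℕ):ℤ) - k) - 1 = (n:ℤ) - k by push_cast; ring,
      show ((n+1:ℕ):ℤ) - k = (n:ℤ) + 1 - k by push_cast; ring,
      show 2*n+1+1 = 2*n+2 from rfl]
    ring
  rw [Finset.sum_congr rfl expand]
  rw [Finset.sum_add_distrib, Finset.sum_add_distrib]
  set f : ℕ → ℂ := fun j => q ^ TT j * gz q (2*n+1) ((n:ℤ) - (j:ℤ)) with hf
  have hAA : AA q n = ∑ k ∈ Finset.range (n+1), f k := rfl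
  have hfz : ∀ j : ℕ, n < j → f j = 0 := by
    intro j hj
    rw [hf]
    simp only []
    rw [gz_of_neg q _ _ (by omega), mul_zero]
  have h1 : ∀ k ∈ Finset.range (n+2),
      q ^ TT k * q ^ (2 * (n:ℤ) + 1 + 1 + 1 - (((n+1:ℕ):ℤ) - (k:ℤ))) * gz q (2*n+1) ((n:ℤ) - 1 - (k:ℤ))
      = q ^ (n+1) * f (k+1) := by
    intro k hk
    rw [hf]
    simp only []
    rw [show 2 * (n:ℤ) + 1 + 1 + 1 - (((n+1:ℕ):ℤ) - (k:ℤ)) = ((n+2+k:ℕ):ℤ) by push_cast; ring,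
      zpow_natCast, show (n:ℤ) - 1 - (k:ℤ) = (n:ℤ) - ((k+1:ℕ):ℤ) by push_cast; ring,
      ← pow_add, ← mul_assoc, ← pow_add]
    congr 2
    rw [TT_succ]; omega
  have h2 : ∀ k ∈ Finset.range (n+2),
      (1 + q ^ (2*n+2)) * (q ^ TT k * gz q (2*n+1) ((n:ℤ) - (k:ℤ))) = (1 + q ^ (2*n+2)) * f k := by
    intro k hk; rfl
  have h3 : ∀ k ∈ Finset.range (n+1),
      q ^ TT (k+1) * q ^ (((n+1:ℕ):ℤ) - ((k+1:ℕ):ℤ)) * gz q (2*n+1) ((n:ℤ) + 1 - ((k+1:ℕ):ℤ))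
      = q ^ (n+1) * f k := by
    intro k hk
    simp only [Finset.mem_range] at hk
    rw [hf]
    simp only []
    rw [show ((n+1:ℕ):ℤ) - ((k+1:ℕ):ℤ) = ((n-k:ℕ):ℤ) by push_cast [Nat.cast_sub (by omega : k ≤ n)]; ring,
      zpow_natCast, show (n:ℤ) + 1 - ((k+1:ℕ):ℤ) = (n:ℤ) - (k:ℤ) by push_cast; ring,
      ← pow_add, ← mul_assoc, ← pow_add]
    congr 2
    have := TT_succ k
    omega
  have hsum1 : ∑ k ∈ Finset.range (n+2),
      q ^ TT k * q ^ (2 * (n:ℤ) + 1 + 1 + 1 - (((n+1:ℕ):ℤ) - (k:ℤ))) * gz q (2*n+1) ((n:ℤ) - 1 - (k:ℤ))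
      = q ^ (n+1) * (AA q n - f 0) := by
    rw [Finset.sum_congr rfl h1, ← Finset.mul_sum]
    congr 1
    have hp := Finset.sum_range_succ' f (n+2)
    rw [Finset.sum_range_succ, Finset.sum_range_succ] at hp
    rw [hfz (n+1) (by omega), hfz (n+2) (by omega)] at hp
    rw [hAA]
    have e0 : q ^ TT 0 * gz q (2*n+1) ((n:ℤ) - ((0:ℕ):ℤ)) = f 0 := rfl
    linear_combination e0 - hp
  have hsum2 : ∑ k ∈ Finset.range (n+2),
      (1 + q ^ (2*n+2)) * (q ^ TT k * gz q (2*n+1) ((n:ℤ) - (k:ℤ)))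
      = (1 + q ^ (2*n+2)) * AA q n := by
    rw [Finset.sum_congr rfl h2, ← Finset.mul_sum, Finset.sum_range_succ,
      hfz (n+1) (by omega), hAA]
    ring
  have hsum3 : ∑ k ∈ Finset.range (n+2),
      q ^ TT k * q ^ (((n+1:ℕ):ℤ) - (k:ℤ)) * gz q (2*n+1) ((n:ℤ) + 1 - (k:ℤ))
      = q ^ (n+1) * AA q n + q ^ (n+1) * f 0 := by
    have hp := Finset.sum_range_succ'
      (fun k => q ^ TT k * q ^ (((n+1:ℕ):ℤ) - (k:ℤ)) * gz q (2*n+1) ((n:ℤ) + 1 - (k:ℤ))) (n+1)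
    rw [hp, Finset.sum_congr rfl h3, ← Finset.mul_sum, ← hAA]
    have h0 : q ^ TT 0 * q ^ (((n+1:ℕ):ℤ) - ((0:ℕ):ℤ)) * gz q (2*n+1) ((n:ℤ) + 1 - ((0:ℕ):ℤ))
        = q ^ (n+1) * f 0 := by
      rw [hf]
      simp only []
      rw [show ((n+1:ℕ):ℤ) - ((0:ℕ):ℤ) = ((n+1:ℕ):ℤ) by push_cast; ring, zpow_natCast]
      rw [show (n:ℤ) + 1 - ((0:ℕ):ℤ) = (n:ℤ) + 1 by push_cast; ring]
      rw [gz_symm q (2*n+1) ((n:ℤ) + 1), show ((2*n+1:ℕ):ℤ) - ((n:ℤ) + 1) = (n:ℤ) - ((0:ℕ):ℤ) by push_cast; ring]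
      rw [show TT 0 = 0 from rfl]
      ring
    rw [h0]
  rw [hsum1, hsum2, hsum3]
  ring
section bounds
variable {q : ℂ}

lemma geom_partial {r : ℝ} (h0 : 0 ≤ r) (h1 : r < 1) (m : ℕ) :
    ∑ j ∈ Finset.range m, r ^ (j+1) ≤ r * (1-r)⁻¹ := by
  have hsummable : Summable (fun j : ℕ => r ^ j) := summable_geometric_of_lt_one h0 h1
  calc ∑ j ∈ Finset.range m, r ^ (j+1) = r * ∑ j ∈ Finset.range m, r ^ j := by
        rw [Finset.mul_sum]; exact Finset.sum_congr rfl fun j _ => by ring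
    _ ≤ r * (1-r)⁻¹ := by
        refine mul_le_mul_of_nonneg_left ?_ h0
        rw [← tsum_geometric_of_lt_one h0 h1]
        exact Summable.sum_le_tsum _ (fun i _ => by positivity) hsummable

lemma pp_norm_le (hq : ‖q‖ < 1) (m : ℕ) : ‖pp q m‖ ≤ Real.exp (‖q‖ * (1-‖q‖)⁻¹) := by
  rw [pp, norm_prod]
  calc ∏ j ∈ Finset.range m, ‖1 - q ^ (j+1)‖
      ≤ ∏ j ∈ Finset.range m, Real.exp (‖q‖ ^ (j+1)) := by
        refine Finset.prod_le_prod (fun j _ => norm_nonneg _) (fun j _ => ?_)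
        calc ‖1 - q ^ (j+1)‖ ≤ ‖(1:ℂ)‖ + ‖q ^ (j+1)‖ := norm_sub_le _ _
          _ = 1 + ‖q‖ ^ (j+1) := by rw [norm_one, norm_pow]
          _ ≤ Real.exp (‖q‖ ^ (j+1)) := by
              have := Real.add_one_le_exp (‖q‖ ^ (j+1)); linarith
    _ = Real.exp (∑ j ∈ Finset.range m, ‖q‖ ^ (j+1)) := (Real.exp_sum _ _).symm
    _ ≤ Real.exp (‖q‖ * (1-‖q‖)⁻¹) :=
        Real.exp_le_exp.mpr (geom_partial (norm_nonneg q) hq m)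

lemma aux_inv_le {r x : ℝ} (h0 : 0 ≤ x) (hxr : x ≤ r) (h1 : r < 1) :
    (1 - x)⁻¹ ≤ Real.exp (x * (1-r)⁻¹) := by
  have hx1 : (0:ℝ) < 1 - x := by linarith
  have hr1 : (0:ℝ) < 1 - r := by linarith
  have h2 : (1 - x)⁻¹ ≤ 1 + x * (1-r)⁻¹ := by
    rw [inv_le_iff_one_le_mul₀ hx1]
    have hc : (1-r) * (1-r)⁻¹ = 1 := mul_inv_cancel₀ (ne_of_gt hr1)
    have hnn : 0 ≤ x * (1-r)⁻¹ * (r - x) :=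
      mul_nonneg (mul_nonneg h0 (inv_nonneg.mpr hr1.le)) (by linarith)
    nlinarith [hnn, hc]
  calc (1-x)⁻¹ ≤ 1 + x * (1-r)⁻¹ := h2
    _ ≤ Real.exp (x * (1-r)⁻¹) := by have := Real.add_one_le_exp (x * (1-r)⁻¹); linarith

lemma pp_inv_norm_le (hq : ‖q‖ < 1) (m : ℕ) :
    ‖(pp q m)⁻¹‖ ≤ Real.exp (‖q‖ * (1-‖q‖)⁻¹ * (1-‖q‖)⁻¹) := by
  rw [pp, ← Finset.prod_inv_distrib, norm_prod]
  calc ∏ j ∈ Finset.range m, ‖(1 - q ^ (j+1))⁻¹‖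
      ≤ ∏ j ∈ Finset.range m, Real.exp (‖q‖ ^ (j+1) * (1-‖q‖)⁻¹) := by
        refine Finset.prod_le_prod (fun j _ => norm_nonneg _) (fun j _ => ?_)
        rw [norm_inv]
        have hb : 1 - ‖q‖ ^ (j+1) ≤ ‖1 - q ^ (j+1)‖ := by
          have := norm_sub_norm_le (1:ℂ) (q ^ (j+1))
          rw [norm_one, norm_pow] at this; linarith
        have hpow1 : ‖q‖ ^ (j+1) ≤ ‖q‖ := by
          calc ‖q‖ ^ (j+1) ≤ ‖q‖ ^ 1 := pow_le_pow_of_le_one (norm_nonneg q) hq.le (by omega)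
            _ = ‖q‖ := pow_one _
        have hql : ‖q‖ ^ (j+1) < 1 := pow_lt_one₀ (norm_nonneg q) hq (by omega)
        have hpos : (0:ℝ) < 1 - ‖q‖ ^ (j+1) := by linarith
        calc ‖1 - q ^ (j+1)‖⁻¹ ≤ (1 - ‖q‖ ^ (j+1))⁻¹ := by
              exact inv_anti₀ hpos hb
          _ ≤ Real.exp (‖q‖ ^ (j+1) * (1-‖q‖)⁻¹) := aux_inv_le (by positivity) hpow1 hq
    _ = Real.exp (∑ j ∈ Finset.range m, ‖q‖ ^ (j+1) * (1-‖q‖)⁻¹) := (Real.exp_sum _ _).symm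
    _ ≤ Real.exp (‖q‖ * (1-‖q‖)⁻¹ * (1-‖q‖)⁻¹) := by
        rw [Real.exp_le_exp, ← Finset.sum_mul]
        exact mul_le_mul_of_nonneg_right (geom_partial (norm_nonneg q) hq m)
          (inv_nonneg.mpr (by linarith))

end bounds


lemma qPoch_succ (a q : ℂ) (n : ℕ) : qPoch a q (n+1) = qPoch a q n * (1 - a * q^n) := by
  rw [qPoch, qPoch, Finset.prod_range_succ]

lemma AA_eq (q : ℂ) (hq : ‖q‖ < 1) (hq0 : q ≠ 0) (n : ℕ) :
    AA q n = ∏ j ∈ Finset.range n, (1 + q^(j+1))^2 := by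
  induction n with
  | zero => rw [AA_zero q hq]; simp
  | succ n ih => rw [AA_succ q hq hq0 n, ih, Finset.prod_range_succ]; ring

lemma gz_norm_le {q : ℂ} (hq : ‖q‖ < 1) (N : ℕ) (m : ℤ) :
    ‖gz q N m‖ ≤ Real.exp (‖q‖ * (1-‖q‖)⁻¹) *
      (Real.exp (‖q‖ * (1-‖q‖)⁻¹ * (1-‖q‖)⁻¹) * Real.exp (‖q‖ * (1-‖q‖)⁻¹ * (1-‖q‖)⁻¹)) := by
  rw [gz]
  split_ifs with h
  · rw [div_eq_mul_inv, mul_inv, ← mul_assoc, norm_mul, norm_mul]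
    have b1 := pp_norm_le hq N
    have b2 := pp_inv_norm_le hq (m.toNat)
    have b3 := pp_inv_norm_le hq (N - m.toNat)
    have h1 : ‖pp q N‖ * ‖(pp q m.toNat)⁻¹‖
        ≤ Real.exp (‖q‖ * (1-‖q‖)⁻¹) * Real.exp (‖q‖ * (1-‖q‖)⁻¹ * (1-‖q‖)⁻¹) :=
      mul_le_mul b1 b2 (norm_nonneg _) (by positivity)
    have h2 := mul_le_mul h1 b3 (norm_nonneg _) (by positivity)
    calc ‖pp q N‖ * ‖(pp q m.toNat)⁻¹‖ * ‖(pp q (N - m.toNat))⁻¹‖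
        ≤ Real.exp (‖q‖ * (1-‖q‖)⁻¹) * Real.exp (‖q‖ * (1-‖q‖)⁻¹ * (1-‖q‖)⁻¹)
            * Real.exp (‖q‖ * (1-‖q‖)⁻¹ * (1-‖q‖)⁻¹) := h2
      _ = _ := by ring
  · simp only [norm_zero]
    positivity

/-- Gauss's identity: `(q^2;q^2)_∞ / (q;q^2)_∞ = ∑_{n≥0} q^{n(n+1)/2}`. -/
theorem gauss_triangular (q : ℂ) (hq : ‖q‖ < 1) :
    qPochInf (q ^ 2) (q ^ 2) / qPochInf q (q ^ 2) = ∑' n : ℕ, q ^ (n * (n + 1) / 2) := by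
  by_cases hq0 : q = 0
  · subst hq0
    have h0 : ((0:ℂ)^2) = 0 := by norm_num
    have h1 : qPochInf ((0:ℂ)^2) ((0:ℂ)^2) = 1 := by
      rw [qPochInf, h0]
      simp
    have h2 : qPochInf 0 ((0:ℂ)^2) = 1 := by
      rw [qPochInf, h0]
      simp
    have h3 : (∑' n : ℕ, (0:ℂ) ^ (n * (n + 1) / 2)) = 1 := by
      rw [tsum_eq_single 0 ?hz]
      · norm_num
      case hz =>
        intro n hn
        have hn1 : 1 ≤ n := Nat.one_le_iff_ne_zero.mpr hn
        have hge : 1 ≤ n * (n+1) / 2 := by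
          have : 2 ≤ n * (n+1) := by nlinarith
          calc 1 = 2/2 := by norm_num
            _ ≤ n * (n+1) / 2 := Nat.div_le_div_right this
        exact zero_pow (by omega)
    rw [h1, h2, h3]
    norm_num
  · have hq2 : ‖q^2‖ < 1 := by
      rw [norm_pow]; exact pow_lt_one₀ (norm_nonneg q) hq (by norm_num)
    have hqn : ‖-q‖ < 1 := by rwa [norm_neg]
    set P := qPochInf q q with hPdef
    set E := qPochInf (q^2) (q^2) with hEdef
    set O := qPochInf q (q^2) with hOdef
    set M := qPochInf (-q) q with hMdef
    have hPne : P ≠ 0 := qPochInf_ne q q hq hq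
    have hEne : E ≠ 0 := qPochInf_ne _ _ hq2 hq2
    have hOne : O ≠ 0 := qPochInf_ne q (q^2) hq hq2
    have hppP : Tendsto (fun n => pp q n) atTop (𝓝 P) := by
      have hfun : (fun n => pp q n) = fun n => qPoch q q n :=
        funext (fun n => Finset.prod_congr rfl fun j _ => by ring)
      rw [hfun]; exact tendsto_qPoch q q hq hq
    have hlimE : Tendsto (qPoch (q^2) (q^2)) atTop (𝓝 E) := tendsto_qPoch _ _ hq2 hq2
    have hlimO : Tendsto (qPoch q (q^2)) atTop (𝓝 O) := tendsto_qPoch _ _ hq hq2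
    have hlimM : Tendsto (qPoch (-q) q) atTop (𝓝 M) := tendsto_qPoch _ _ hqn hq
    -- O * E = P
    have hfin1 : ∀ n, qPoch q (q^2) n * qPoch (q^2) (q^2) n = pp q (2*n) := by
      intro n
      induction n with
      | zero => simp [qPoch, pp]
      | succ n ih =>
        rw [qPoch_succ, qPoch_succ, show 2*(n+1) = (2*n+1)+1 by ring, pp_succ, pp_succ, ← ih]
        ring
    have h2nat : Tendsto (fun n : ℕ => pp q (2*n)) atTop (𝓝 P) :=
      hppP.comp (tendsto_atTop_mono (fun n => by omega : ∀ n : ℕ, n ≤ 2*n) tendsto_id)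
    have hOE : O * E = P :=
      tendsto_nhds_unique (hlimO.mul hlimE) (h2nat.congr (fun n => (hfin1 n).symm))
    -- M * P = E
    have hfin2 : ∀ n, qPoch (-q) q n * pp q n = qPoch (q^2) (q^2) n := by
      intro n
      rw [qPoch, pp, qPoch, ← Finset.prod_mul_distrib]
      exact Finset.prod_congr rfl fun j _ => by ring
    have hME : M * P = E :=
      tendsto_nhds_unique (hlimM.mul hppP) (hlimE.congr (fun n => (hfin2 n).symm))
    -- dominated convergence
    set S := ∑' k : ℕ, q ^ TT k with hSdef
    set Cb := Real.exp (‖q‖ * (1-‖q‖)⁻¹) *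
      (Real.exp (‖q‖ * (1-‖q‖)⁻¹ * (1-‖q‖)⁻¹) * Real.exp (‖q‖ * (1-‖q‖)⁻¹ * (1-‖q‖)⁻¹))
      with hCb
    set F : ℕ → ℕ → ℂ :=
      fun n k => if k ≤ n then q ^ TT k * gz q (2*n+1) ((n:ℤ) - k) else 0 with hF
    have htsumF : ∀ n, ∑' k, F n k = AA q n := by
      intro n
      rw [AA, tsum_eq_sum (s := Finset.range (n+1)) ?hzero]
      · refine Finset.sum_congr rfl fun k hk => ?_
        rw [hF]
        simp only []
        rw [if_pos (by simpa using Nat.lt_succ_iff.mp (Finset.mem_range.mp hk))]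
      case hzero =>
        intro k hk
        rw [hF]
        simp only []
        rw [if_neg (by simp only [Finset.mem_range] at hk; omega)]
    have hbound : ∀ n k, ‖F n k‖ ≤ ‖q‖^k * Cb := by
      intro n k
      rw [hF]
      simp only []
      split_ifs with h
      · rw [norm_mul, norm_pow]
        refine mul_le_mul ?_ (gz_norm_le hq _ _) (norm_nonneg _) (by positivity)
        exact pow_le_pow_of_le_one (norm_nonneg q) hq.le (TT_ge k)
      · rw [norm_zero]; positivity
    have hsummable_bound : Summable (fun k => ‖q‖^k * Cb) :=
      (summable_geometric_of_lt_one (norm_nonneg q) hq).mul_right _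
    have hlim_term : ∀ k, Tendsto (fun n => F n k) atTop (𝓝 (q ^ TT k * (P / (P * P)))) := by
      intro k
      have hodd : Tendsto (fun n : ℕ => 2*n+1) atTop atTop :=
        tendsto_atTop_mono (fun n => by omega : ∀ n : ℕ, n ≤ 2*n+1) tendsto_id
      have hadd : Tendsto (fun n : ℕ => n+1+k) atTop atTop :=
        tendsto_atTop_mono (fun n => by omega : ∀ n : ℕ, n ≤ n+1+k) tendsto_id
      have hdiv : Tendsto (fun n => pp q (2*n+1) / (pp q (n-k) * pp q (n+1+k))) atTop
          (𝓝 (P / (P * P))) :=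
        Tendsto.div (hppP.comp hodd)
          ((hppP.comp (tendsto_sub_atTop_nat k)).mul (hppP.comp hadd))
          (mul_ne_zero hPne hPne)
      refine Tendsto.congr' ?_ (hdiv.const_mul (q ^ TT k))
      filter_upwards [eventually_ge_atTop k] with n hn
      rw [hF]
      simp only []
      rw [if_pos hn]
      congr 1
      rw [show (n:ℤ) - k = ((n-k:ℕ):ℤ) by omega, gz_nat q (2*n+1) (n-k) (by omega),
        show 2*n+1 - (n-k) = n+1+k by omega]
    have hlimAA1 : Tendsto (AA q) atTop (𝓝 (∑' k, q ^ TT k * (P / (P * P)))) := by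
      have := tendsto_tsum_of_dominated_convergence hsummable_bound hlim_term
        (Eventually.of_forall hbound)
      exact this.congr htsumF
    have hlimAA2 : Tendsto (AA q) atTop (𝓝 (M * M)) := by
      have heq : ∀ n, AA q n = qPoch (-q) q n * qPoch (-q) q n := by
        intro n
        rw [AA_eq q hq hq0 n, qPoch, ← Finset.prod_mul_distrib]
        exact Finset.prod_congr rfl fun j _ => by ring
      exact (hlimM.mul hlimM).congr (fun n => (heq n).symm)
    have hkey : (∑' k, q ^ TT k * (P / (P * P))) = M * M :=
      tendsto_nhds_unique hlimAA1 hlimAA2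
    have hSP : S * (P / (P * P)) = M * M := by
      rw [hSdef, ← tsum_mul_right, hkey]
    have hS : S = M * M * P := by
      have hPP : P / (P * P) = P⁻¹ := by field_simp
      rw [hPP] at hSP
      field_simp at hSP
      linear_combination hSP
    have hRHS : (∑' n : ℕ, q ^ (n * (n + 1) / 2)) = S := rfl
    rw [hRHS, div_eq_iff hOne]
    have hmain : S * O * E = E * E := by
      rw [hS]
      linear_combination (M*M*P) * hOE + (M*P + E) * hME
    have := mul_right_cancel₀ hEne hmain
    linear_combination -this
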